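/- For an irreducible stochastic matrix p on a finite state space with invariant measure μ satisfying the uniform geometric convergence |p^k g − μ(g)| ≤ ζ θ^k v pointwise for ‖g‖_v ≤ 1, the operator B := Σ_{k=0}^∞ (p^k − 1⊗μ) is well-defined on the space of functions with finite v-norm, has operator v-norm at most ζ/(1−θ), and for any probability measure μ* on X, the identity μ* − μ = (μ* − μ* p) B holds. -/

import Mathlib

open Matrix BigOperators

/-- For an irreducible stochastic matrix `p` with invariant probability measure `μ`
satisfying the uniform geometric convergence `|p^k g - μ(g)| ≤ ζ θ^k v` for `‖g‖_v ≤ 1`,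
the operator `B = Σ_k (p^k - 1⊗μ)` is well-defined, has `v`-operator norm at most
`ζ/(1-θ)`, and for any probability measure `μ*`, `μ* - μ = (μ* - μ* p) B`. -/
theorem fundamental_kernel_identity {X : Type*} [Fintype X] [Nonempty X] [DecidableEq X]
    (p : Matrix X X ℝ)
    (hp_nonneg : ∀ b c, 0 ≤ p b c) (hp_row : ∀ b, ∑ c, p b c = 1)
    (hp_irred : ∀ b c, ∃ k : ℕ, 0 < (p ^ k) b c)
    (μ : X → ℝ) (hμ_nonneg : ∀ b, 0 ≤ μ b) (hμ_sum : ∑ b, μ b = 1)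
    (hμ_inv : Matrix.vecMul μ p = μ)
    (v : X → ℝ) (hv : ∀ b, 1 ≤ v b)
    (ζ θ : ℝ) (hζ : 0 < ζ) (hθ : θ ∈ Set.Ioo (0:ℝ) 1)
    (hgeom : ∀ g : X → ℝ, (∀ b, |g b| ≤ v b) → ∀ k : ℕ, ∀ b,
      |((p ^ k).mulVec g) b - ∑ c, μ c * g c| ≤ ζ * θ ^ k * v b) :
    Summable (fun k : ℕ => p ^ k - Matrix.of (fun (_ b : X) => μ b)) ∧
    ∀ B : Matrix X X ℝ, B = (∑' k : ℕ, (p ^ k - Matrix.of (fun (_ b : X) => μ b))) →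
      (∀ g : X → ℝ, (∀ b, |g b| ≤ v b) → ∀ b, |(B.mulVec g) b| ≤ ζ / (1 - θ) * v b) ∧
      (∀ μstar : X → ℝ, (∀ b, 0 ≤ μstar b) → ∑ b, μstar b = 1 →
        (fun b => μstar b - μ b) =
          Matrix.vecMul (fun b => μstar b - (Matrix.vecMul μstar p) b) B) := by
  obtain ⟨hθ0, hθ1⟩ := hθ
  set M : ℕ → Matrix X X ℝ := fun k => p ^ k - Matrix.of (fun (_ b : X) => μ b) with hM
  have hMapp : ∀ (k : ℕ) (b c : X), M k b c = (p ^ k) b c - μ c := fun k b c => rfl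
  -- entrywise geometric bound
  have key : ∀ (k : ℕ) (b c : X), |(p ^ k) b c - μ c| ≤ ζ * θ ^ k * v b := by
    intro k b c
    have h1 : ∀ d, |(if d = c then (1:ℝ) else 0)| ≤ v d := by
      intro d
      rcases eq_or_ne d c with h | h
      · simpa [h] using hv c
      · rw [if_neg h]
        simpa using le_trans zero_le_one (hv d)
    have h := hgeom (fun d => if d = c then 1 else 0) h1 k b
    simpa [Matrix.mulVec, dotProduct, mul_ite, mul_one, mul_zero] using h
  have hgb : Summable fun k : ℕ => θ ^ k := summable_geometric_of_lt_one hθ0.le hθ1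
  -- summability of entries
  have habs : ∀ b c, Summable fun k : ℕ => |(p ^ k) b c - μ c| := by
    intro b c
    exact Summable.of_nonneg_of_le (fun k => abs_nonneg _) (fun k => key k b c)
      ((hgb.mul_left ζ).mul_right (v b))
  have hsum_entry : ∀ b c, Summable fun k : ℕ => (p ^ k) b c - μ c :=
    fun b c => (habs b c).of_abs
  have hS : Summable M := by
    refine Pi.summable.mpr ?_
    intro b
    rw [Pi.summable]
    intro c
    exact hsum_entry b c
  refine ⟨hS, ?_⟩
  intro B hB
  have hBe : ∀ b c, B b c = ∑' k : ℕ, ((p ^ k) b c - μ c) := by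
    intro b c
    calc B b c = (∑' k, M k) b c := by rw [hB]
      _ = (∑' k, M k b) c := congrFun (tsum_apply (f := (M : ℕ → X → X → ℝ)) hS) c
      _ = ∑' k, M k b c := tsum_apply (Pi.summable.mp hS b)
  constructor
  · -- operator norm bound
    intro g hg b
    have hterm : ∀ k : ℕ, |∑ c, ((p ^ k) b c - μ c) * g c| ≤ ζ * θ ^ k * v b := by
      intro k
      have h := hgeom g hg k b
      have heq : ∑ c, ((p ^ k) b c - μ c) * g c
          = (p ^ k).mulVec g b - ∑ c, μ c * g c := by
        simp [Matrix.mulVec, dotProduct, sub_mul, Finset.sum_sub_distrib]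
      rw [heq]; exact h
    have htsum : Summable fun k : ℕ => ∑ c, ((p ^ k) b c - μ c) * g c := by
      apply summable_sum
      intro c _
      exact (hsum_entry b c).mul_right (g c)
    have habss : Summable fun k : ℕ => |∑ c, ((p ^ k) b c - μ c) * g c| := htsum.abs
    have hBv : B.mulVec g b = ∑' k : ℕ, ∑ c, ((p ^ k) b c - μ c) * g c := by
      have h1 : B.mulVec g b = ∑ c, (∑' k : ℕ, ((p ^ k) b c - μ c)) * g c := by
        simp [Matrix.mulVec, dotProduct, hBe]
      have h2 : ∀ c : X, (∑' k : ℕ, ((p ^ k) b c - μ c)) * g c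
          = ∑' k : ℕ, ((p ^ k) b c - μ c) * g c := fun c => tsum_mul_right.symm
      rw [h1, Finset.sum_congr rfl fun c _ => h2 c]
      exact (Summable.tsum_finsetSum fun c _ => (hsum_entry b c).mul_right (g c)).symm
    have hgeo_sum : ∑' k : ℕ, ζ * θ ^ k * v b = ζ / (1 - θ) * v b := by
      have h : ∀ k : ℕ, ζ * θ ^ k * v b = (ζ * v b) * θ ^ k := fun k => by ring
      rw [tsum_congr h, tsum_mul_left, tsum_geometric_of_lt_one hθ0.le hθ1]
      have : (1 : ℝ) - θ ≠ 0 := by linarith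
      field_simp
    rw [hBv]
    calc |∑' k : ℕ, ∑ c, ((p ^ k) b c - μ c) * g c|
        ≤ ∑' k : ℕ, |∑ c, ((p ^ k) b c - μ c) * g c| := by
          have hns : Summable fun k : ℕ => ‖∑ c, ((p ^ k) b c - μ c) * g c‖ := by
            simpa only [Real.norm_eq_abs] using habss
          have h := norm_tsum_le_tsum_norm hns
          simpa only [Real.norm_eq_abs] using h
      _ ≤ ∑' k : ℕ, ζ * θ ^ k * v b :=
          Summable.tsum_le_tsum hterm habss ((hgb.mul_left ζ).mul_right (v b))
      _ = ζ / (1 - θ) * v b := hgeo_sum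
  · -- fundamental identity
    intro μstar hμs_nonneg hμs_sum
    funext b
    set ν : X → ℝ := fun a => μstar a - Matrix.vecMul μstar p a with hν
    have hνsum : ∑ a, ν a = 0 := by
      have h1 : ∑ a, Matrix.vecMul μstar p a = 1 := by
        simp only [Matrix.vecMul, dotProduct]
        rw [Finset.sum_comm]
        simp [← Finset.mul_sum, hp_row, hμs_sum]
      simp [hν, Finset.sum_sub_distrib, hμs_sum, h1]
    set f : ℕ → ℝ := fun k => Matrix.vecMul μstar (p ^ k) b with hf
    have hfeq : ∀ k, f k = ∑ a, μstar a * (p ^ k) a b := by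
      intro k; simp [hf, Matrix.vecMul, dotProduct]
    have hfS : ∀ k, f (k + 1) = ∑ a, Matrix.vecMul μstar p a * (p ^ k) a b := by
      intro k
      have h1 : p ^ (k + 1) = p * p ^ k := by rw [pow_succ']
      rw [hf]
      simp only [h1, ← Matrix.vecMul_vecMul]
      simp [Matrix.vecMul, dotProduct]
    have hkey2 : ∀ k : ℕ, ∑ a, ν a * ((p ^ k) a b - μ b) = f k - f (k + 1) := by
      intro k
      have h1 : ∑ a, ν a * ((p ^ k) a b - μ b)
          = ∑ a, ν a * (p ^ k) a b - (∑ a, ν a) * μ b := by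
        rw [Finset.sum_mul]
        rw [← Finset.sum_sub_distrib]
        congr 1; ext a; ring
      rw [h1, hνsum, zero_mul, sub_zero, hfeq, hfS]
      rw [← Finset.sum_sub_distrib]
      congr 1; ext a
      simp only [hν]; ring
    -- limit of f
    have hflim : Filter.Tendsto f Filter.atTop (nhds (μ b)) := by
      have hb : ∀ k : ℕ, ‖f k - μ b‖ ≤ (ζ * ∑ a, μstar a * v a) * θ ^ k := by
        intro k
        have heq : f k - μ b = ∑ a, μstar a * ((p ^ k) a b - μ b) := by
          have h2 : ∑ a, μstar a * ((p ^ k) a b - μ b)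
              = (∑ a, μstar a * (p ^ k) a b) - (∑ a, μstar a) * μ b := by
            rw [Finset.sum_mul, ← Finset.sum_sub_distrib]
            congr 1; ext a; ring
          rw [hfeq, h2, hμs_sum, one_mul]
        rw [Real.norm_eq_abs, heq]
        calc |∑ a, μstar a * ((p ^ k) a b - μ b)|
            ≤ ∑ a, |μstar a * ((p ^ k) a b - μ b)| := Finset.abs_sum_le_sum_abs _ _
          _ ≤ ∑ a, μstar a * (ζ * θ ^ k * v a) := by
              apply Finset.sum_le_sum
              intro a _
              rw [abs_mul, abs_of_nonneg (hμs_nonneg a)]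
              exact mul_le_mul_of_nonneg_left (key k a b) (hμs_nonneg a)
          _ = (ζ * ∑ a, μstar a * v a) * θ ^ k := by
              rw [Finset.mul_sum, Finset.sum_mul]
              congr 1; ext a; ring
      have h0 : Filter.Tendsto (fun k : ℕ => (ζ * ∑ a, μstar a * v a) * θ ^ k)
          Filter.atTop (nhds 0) := by
        simpa using (tendsto_pow_atTop_nhds_zero_of_lt_one hθ0.le hθ1).const_mul
          (ζ * ∑ a, μstar a * v a)
      have hz := squeeze_zero_norm hb h0
      have := hz.add (tendsto_const_nhds (x := μ b))
      simpa using this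
    set t : ℕ → ℝ := fun k => ∑ a, ν a * ((p ^ k) a b - μ b) with ht
    have htS : Summable t := by
      apply summable_sum
      intro a _
      exact (hsum_entry a b).mul_left (ν a)
    have hpart : ∀ n : ℕ, ∑ k ∈ Finset.range n, t k = f 0 - f n := by
      intro n
      calc ∑ k ∈ Finset.range n, t k = ∑ k ∈ Finset.range n, (f k - f (k + 1)) :=
            Finset.sum_congr rfl fun k _ => hkey2 k
        _ = f 0 - f n := Finset.sum_range_sub' f n
    have hf0 : f 0 = μstar b := by simp [hf]
    have hlim2 : Filter.Tendsto (fun n => ∑ k ∈ Finset.range n, t k)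
        Filter.atTop (nhds (μstar b - μ b)) := by
      have h := (tendsto_const_nhds (x := f 0)).sub hflim
      have h' := h.congr fun n => (hpart n).symm
      rwa [hf0] at h'
    have hts : ∑' k, t k = μstar b - μ b :=
      tendsto_nhds_unique htS.hasSum.tendsto_sum_nat hlim2
    -- compute vecMul ν B b
    have hvm : Matrix.vecMul ν B b = ∑' k, t k := by
      have h1 : Matrix.vecMul ν B b = ∑ a, ν a * B a b := by
        simp [Matrix.vecMul, dotProduct]
      have h2 : ∀ a : X, ν a * B a b = ∑' k : ℕ, ν a * ((p ^ k) a b - μ b) := by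
        intro a
        rw [hBe a b, ← tsum_mul_left]
      rw [h1, Finset.sum_congr rfl fun a _ => h2 a]
      exact (Summable.tsum_finsetSum fun a _ => (hsum_entry a b).mul_left (ν a)).symm
    rw [show (fun a => μstar a - Matrix.vecMul μstar p a) = ν from rfl] at *
    rw [hvm, hts]
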